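/- Fix q > 1, T ∈ (0,∞), and a constant A > 0, and assume 0 ≤ a_{i,j} = a_{j,i} ≤ A(i+j) for all i,j ≥ 1. Let n ≥ 2 and let w^n be the unique nonnegative C^1 solution on [0,T] of the truncated coagulation–collisional-breakage system with nonnegative initial data (w_i^0)_{i=1}^n of first moment at most ‖w^0‖. Then, with ȷ_q > 0 the constant (depending only on q) for which (i+j)((i+j)^q − i^q − j^q) ≤ ȷ_q (i j^q + i^q j) for all i,j ≥ 1, one has ∑_{i=1}^{n} i^q w_i^n(t) ≤ exp(A ȷ_q ‖w^0‖ t) ∑_{i=1}^{n} i^q w_i^0 for all t ∈ [0,T]. -/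

import Mathlib

/-- The right-hand side of the truncated discrete coagulation equations with
collisional breakage. -/
noncomputable def truncRHS (a p : ℕ → ℕ → ℝ) (N : ℕ → ℕ → ℕ → ℝ) (n i : ℕ)
    (w : ℕ → ℝ) : ℝ :=
    (1/2) * ∑ j ∈ Finset.Icc 1 (i-1), p j (i-j) * a j (i-j) * w j * w (i-j)
  - ∑ j ∈ Finset.Icc 1 (n-i), a i j * w i * w j
  + (1/2) * ∑ j ∈ Finset.Icc (i+1) n, ∑ k ∈ Finset.Icc 1 (j-1),
      N (j-k) k i * (1 - p (j-k) k) * a (j-k) k * w (j-k) * w k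

namespace TruncAux

open Finset

/-- The set of admissible pairs in the truncated system. -/
def S (n : ℕ) : Finset (ℕ × ℕ) :=
  (Finset.Icc 1 n ×ˢ Finset.Icc 1 n).filter fun p => p.1 + p.2 ≤ n

lemma mem_S {n : ℕ} {p : ℕ × ℕ} : p ∈ S n ↔ 1 ≤ p.1 ∧ 1 ≤ p.2 ∧ p.1 + p.2 ≤ n := by
  simp only [S, mem_filter, mem_product, mem_Icc]; omega

lemma sum_S_symm {n : ℕ} (F : ℕ → ℕ → ℝ) :
    ∑ p ∈ S n, F p.1 p.2 = ∑ p ∈ S n, F p.2 p.1 := by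
  refine Finset.sum_nbij' (fun p => (p.2, p.1)) (fun p => (p.2, p.1)) ?_ ?_ ?_ ?_ ?_
  · rintro ⟨l,m⟩ hp; simp only [mem_S] at hp ⊢; omega
  · rintro ⟨l,m⟩ hp; simp only [mem_S] at hp ⊢; omega
  · rintro ⟨l,m⟩ _; rfl
  · rintro ⟨l,m⟩ _; rfl
  · rintro ⟨l,m⟩ _; rfl

lemma coag_reindex (n : ℕ) (f : ℕ → ℝ) (g : ℕ → ℕ → ℝ) :
    ∑ i ∈ Icc 1 n, f i * ∑ j ∈ Icc 1 (i-1), g j (i-j)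
      = ∑ p ∈ S n, f (p.1 + p.2) * g p.1 p.2 := by
  have h : ∑ i ∈ Icc 1 n, f i * ∑ j ∈ Icc 1 (i-1), g j (i-j)
      = ∑ x ∈ (Icc 1 n).sigma (fun i => Icc 1 (i-1)), f x.1 * g x.2 (x.1 - x.2) := by
    rw [Finset.sum_sigma]
    exact Finset.sum_congr rfl fun i _ => by rw [Finset.mul_sum]
  rw [h]
  refine Finset.sum_nbij' (fun x => (x.2, x.1 - x.2)) (fun p => ⟨p.1 + p.2, p.1⟩)
    ?_ ?_ ?_ ?_ ?_
  · rintro ⟨i, j⟩ hx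
    simp only [Finset.mem_sigma, mem_Icc] at hx
    simp only [mem_S]
    omega
  · rintro ⟨l, m⟩ hp
    simp only [mem_S] at hp
    simp only [Finset.mem_sigma, mem_Icc]
    omega
  · rintro ⟨i, j⟩ hx
    simp only [Finset.mem_sigma, mem_Icc] at hx
    have hji : j + (i - j) = i := by omega
    simp [hji]
  · rintro ⟨l, m⟩ hp
    simp only [mem_S] at hp
    have : l + m - l = m := by omega
    simp [this]
  · rintro ⟨i, j⟩ hx
    simp only [Finset.mem_sigma, mem_Icc] at hx
    have : j + (i - j) = i := by omega
    simp [this]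

lemma loss_reindex (n : ℕ) (G : ℕ → ℕ → ℝ) :
    ∑ i ∈ Icc 1 n, ∑ j ∈ Icc 1 (n-i), G i j = ∑ p ∈ S n, G p.1 p.2 := by
  have h : ∑ i ∈ Icc 1 n, ∑ j ∈ Icc 1 (n-i), G i j
      = ∑ x ∈ (Icc 1 n).sigma (fun i => Icc 1 (n-i)), G x.1 x.2 := by
    rw [Finset.sum_sigma]
  rw [h]
  refine Finset.sum_nbij' (fun x => (x.1, x.2)) (fun p => ⟨p.1, p.2⟩) ?_ ?_ ?_ ?_ ?_
  · rintro ⟨i, j⟩ hx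
    simp only [Finset.mem_sigma, mem_Icc] at hx
    simp only [mem_S]
    omega
  · rintro ⟨l, m⟩ hp
    simp only [mem_S] at hp
    simp only [Finset.mem_sigma, mem_Icc]
    omega
  · rintro ⟨i, j⟩ _; rfl
  · rintro ⟨l, m⟩ _; rfl
  · rintro ⟨i, j⟩ _; rfl

lemma brk_reindex (n : ℕ) (f : ℕ → ℝ) (H : ℕ → ℕ → ℕ → ℝ) :
    ∑ i ∈ Icc 1 n, f i * ∑ j ∈ Icc (i+1) n, ∑ k ∈ Icc 1 (j-1), H (j-k) k i
      = ∑ p ∈ S n, ∑ s ∈ Icc 1 (p.1 + p.2 - 1), f s * H p.1 p.2 s := by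
  have h : ∑ i ∈ Icc 1 n, f i * ∑ j ∈ Icc (i+1) n, ∑ k ∈ Icc 1 (j-1), H (j-k) k i
      = ∑ x ∈ (((Icc 1 n).sigma fun i => Icc (i+1) n).sigma fun y => Icc 1 (y.2 - 1)),
          f x.1.1 * H (x.1.2 - x.2) x.2 x.1.1 := by
    rw [Finset.sum_sigma, Finset.sum_sigma]
    refine Finset.sum_congr rfl fun i _ => ?_
    rw [Finset.mul_sum]
    exact Finset.sum_congr rfl fun j _ => by rw [Finset.mul_sum]
  have h2 : ∑ p ∈ S n, ∑ s ∈ Icc 1 (p.1 + p.2 - 1), f s * H p.1 p.2 s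
      = ∑ x ∈ ((S n).sigma fun p => Icc 1 (p.1 + p.2 - 1)), f x.2 * H x.1.1 x.1.2 x.2 := by
    rw [Finset.sum_sigma]
  rw [h, h2]
  refine Finset.sum_nbij' (fun x => ⟨(x.1.2 - x.2, x.2), x.1.1⟩)
    (fun y => ⟨⟨y.2, y.1.1 + y.1.2⟩, y.1.2⟩) ?_ ?_ ?_ ?_ ?_
  · rintro ⟨⟨i, j⟩, k⟩ hx
    simp only [Finset.mem_sigma, mem_Icc] at hx
    simp only [Finset.mem_sigma, mem_S, mem_Icc]
    omega
  · rintro ⟨⟨l, m⟩, s⟩ hy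
    simp only [Finset.mem_sigma, mem_S, mem_Icc] at hy
    simp only [Finset.mem_sigma, mem_Icc]
    omega
  · rintro ⟨⟨i, j⟩, k⟩ hx
    simp only [Finset.mem_sigma, mem_Icc] at hx
    have h1 : j - k + k = j := by omega
    simp [h1]
  · rintro ⟨⟨l, m⟩, s⟩ hy
    simp only [Finset.mem_sigma, mem_S, mem_Icc] at hy
    have h1 : l + m - m = l := by omega
    simp [h1]
  · rintro ⟨⟨i, j⟩, k⟩ _
    rfl

/-- The key estimate on the weighted sum of the right-hand sides. -/
lemma rhs_sum_le (a p : ℕ → ℕ → ℝ) (N : ℕ → ℕ → ℕ → ℝ) (n : ℕ)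
    (ha_nonneg : ∀ i j, 0 ≤ a i j) (ha_symm : ∀ i j, a i j = a j i)
    (hp_le : ∀ i j, p i j ≤ 1)
    (c : ℕ → ℝ)
    (hfrag : ∀ l m, 1 ≤ l → 1 ≤ m → l + m ≤ n →
      ∑ s ∈ Icc 1 (l + m - 1), c s * N l m s ≤ c (l + m))
    (w : ℕ → ℝ) (hw : ∀ i ∈ Icc 1 n, 0 ≤ w i) :
    ∑ i ∈ Icc 1 n, c i * truncRHS a p N n i w
      ≤ (1/2) * ∑ x ∈ S n,
          (c (x.1 + x.2) - c x.1 - c x.2) * (a x.1 x.2 * w x.1 * w x.2) := by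
  have h1 : ∑ i ∈ Icc 1 n, c i * truncRHS a p N n i w
      = (1/2) * ∑ x ∈ S n,
          c (x.1 + x.2) * (p x.1 x.2 * a x.1 x.2 * w x.1 * w x.2)
      - ∑ x ∈ S n, c x.1 * (a x.1 x.2 * w x.1 * w x.2)
      + (1/2) * ∑ x ∈ S n, ∑ s ∈ Icc 1 (x.1 + x.2 - 1),
          c s * (N x.1 x.2 s * (1 - p x.1 x.2) * a x.1 x.2 * w x.1 * w x.2) := by
    rw [← coag_reindex n c (fun l m => p l m * a l m * w l * w m),
        ← loss_reindex n (fun i j => c i * (a i j * w i * w j)),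
        ← brk_reindex n c (fun l m s => N l m s * (1 - p l m) * a l m * w l * w m)]
    simp only [truncRHS]
    rw [Finset.mul_sum, Finset.mul_sum, ← Finset.sum_sub_distrib, ← Finset.sum_add_distrib]
    refine Finset.sum_congr rfl fun i _ => ?_
    rw [show ∑ j ∈ Icc 1 (n-i), c i * (a i j * w i * w j)
        = c i * ∑ j ∈ Icc 1 (n-i), a i j * w i * w j from (Finset.mul_sum _ _ _).symm]
    ring
  have h2 : ∑ x ∈ S n, c x.1 * (a x.1 x.2 * w x.1 * w x.2)
      = (1/2) * ∑ x ∈ S n, (c x.1 + c x.2) * (a x.1 x.2 * w x.1 * w x.2) := by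
    have hs := sum_S_symm (n := n) (fun u v => c u * (a u v * w u * w v))
    have : ∀ x ∈ S n, (1/2 : ℝ) * ((c x.1 + c x.2) * (a x.1 x.2 * w x.1 * w x.2))
        = (1/2) * (c x.1 * (a x.1 x.2 * w x.1 * w x.2))
          + (1/2) * (c x.2 * (a x.2 x.1 * w x.2 * w x.1)) := by
      intro x _
      rw [ha_symm x.2 x.1]
      ring
    rw [Finset.mul_sum, Finset.sum_congr rfl this, Finset.sum_add_distrib,
        ← Finset.mul_sum, ← Finset.mul_sum, ← hs]
    ring
  rw [h1, h2, Finset.mul_sum, Finset.mul_sum, Finset.mul_sum, ← Finset.sum_sub_distrib,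
      ← Finset.sum_add_distrib, Finset.mul_sum]
  refine Finset.sum_le_sum fun x hx => ?_
  obtain ⟨hl, hm, hlm⟩ := mem_S.mp hx
  have hw1 : 0 ≤ w x.1 := hw _ (Finset.mem_Icc.mpr ⟨hl, by omega⟩)
  have hw2 : 0 ≤ w x.2 := hw _ (Finset.mem_Icc.mpr ⟨hm, by omega⟩)
  have hD : 0 ≤ a x.1 x.2 * w x.1 * w x.2 :=
    mul_nonneg (mul_nonneg (ha_nonneg _ _) hw1) hw2
  have hSle := hfrag x.1 x.2 hl hm hlm
  have hbrk : ∑ s ∈ Icc 1 (x.1 + x.2 - 1),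
      c s * (N x.1 x.2 s * (1 - p x.1 x.2) * a x.1 x.2 * w x.1 * w x.2)
      = (∑ s ∈ Icc 1 (x.1 + x.2 - 1), c s * N x.1 x.2 s)
        * ((1 - p x.1 x.2) * (a x.1 x.2 * w x.1 * w x.2)) := by
    rw [Finset.sum_mul]
    exact Finset.sum_congr rfl fun s _ => by ring
  rw [hbrk]
  have hp1 : 0 ≤ 1 - p x.1 x.2 := by linarith [hp_le x.1 x.2]
  nlinarith [mul_nonneg (mul_nonneg hp1 (sub_nonneg.mpr hSle)) hD]

lemma myAntitoneOn {T : ℝ} (f f' : ℝ → ℝ)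
    (hf : ∀ t ∈ Set.Icc (0:ℝ) T, HasDerivWithinAt f (f' t) (Set.Icc 0 T) t)
    (h' : ∀ t ∈ Set.Ioo (0:ℝ) T, f' t ≤ 0) : AntitoneOn f (Set.Icc 0 T) := by
  apply antitoneOn_of_hasDerivWithinAt_nonpos (convex_Icc 0 T)
    (fun t ht => (hf t ht).continuousWithinAt)
  · intro t ht
    rw [interior_Icc] at ht ⊢
    exact (hf t (Set.mem_Icc_of_Ioo ht)).mono Set.Ioo_subset_Icc_self
  · intro t ht
    rw [interior_Icc] at ht
    exact h' t ht

lemma rpow_superadd {q : ℝ} (hq : 1 < q) {x y : ℝ} (hx : 0 < x) (hy : 0 < y) :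
    x ^ q + y ^ q ≤ (x + y) ^ q := by
  have hxy : (0:ℝ) < x + y := by linarith
  have h1 : x ^ q ≤ (x + y) ^ (q - 1) * x := by
    calc x ^ q = x ^ (q - 1) * x ^ (1:ℝ) := by rw [← Real.rpow_add hx]; ring_nf
      _ ≤ (x + y) ^ (q - 1) * x ^ (1:ℝ) :=
          mul_le_mul_of_nonneg_right
            (Real.rpow_le_rpow hx.le (by linarith) (by linarith))
            (Real.rpow_nonneg hx.le 1)
      _ = (x + y) ^ (q - 1) * x := by rw [Real.rpow_one]
  have h2 : y ^ q ≤ (x + y) ^ (q - 1) * y := by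
    calc y ^ q = y ^ (q - 1) * y ^ (1:ℝ) := by rw [← Real.rpow_add hy]; ring_nf
      _ ≤ (x + y) ^ (q - 1) * y ^ (1:ℝ) :=
          mul_le_mul_of_nonneg_right
            (Real.rpow_le_rpow hy.le (by linarith) (by linarith))
            (Real.rpow_nonneg hy.le 1)
      _ = (x + y) ^ (q - 1) * y := by rw [Real.rpow_one]
  calc x ^ q + y ^ q ≤ (x + y) ^ (q - 1) * (x + y) := by linarith
    _ = (x + y) ^ (q - 1) * (x + y) ^ (1:ℝ) := by rw [Real.rpow_one]
    _ = (x + y) ^ q := by rw [← Real.rpow_add hxy]; ring_nf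

/-- Fragmentation moment bound: the `q`-moment of the fragments is at most
`(l+m)^q`. -/
lemma frag_bound {q : ℝ} (hq : 1 < q) (N : ℕ → ℕ → ℕ → ℝ)
    (hN_nonneg : ∀ i j s, 0 ≤ N i j s)
    (hN_mass : ∀ i j, 1 ≤ i → 1 ≤ j →
      ∑ s ∈ Finset.Icc 1 (i+j-1), (Nat.cast s : ℝ) * N i j s = (i : ℝ) + (j : ℝ))
    (l m : ℕ) (hl : 1 ≤ l) (hm : 1 ≤ m) :
    ∑ s ∈ Icc 1 (l + m - 1), ((s : ℝ)) ^ q * N l m s ≤ (((l + m : ℕ)) : ℝ) ^ q := by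
  have hcast : (((l + m : ℕ)) : ℝ) = (l : ℝ) + (m : ℝ) := by push_cast; ring
  have hpos : (0:ℝ) < (((l + m : ℕ)) : ℝ) := by
    have : 0 < l + m := by omega
    exact_mod_cast this
  have hstep : ∀ s ∈ Icc 1 (l + m - 1),
      ((s : ℝ)) ^ q * N l m s ≤ (((l + m : ℕ)) : ℝ) ^ (q - 1) * ((s : ℝ) * N l m s) := by
    intro s hs
    rw [Finset.mem_Icc] at hs
    have hs0 : (0:ℝ) < (s : ℝ) := by exact_mod_cast hs.1
    have hsle : (s : ℝ) ≤ (((l + m : ℕ)) : ℝ) := by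
      have : s ≤ l + m := by omega
      exact_mod_cast this
    have e1 : ((s : ℝ)) ^ q = ((s : ℝ)) ^ (q - 1) * (s : ℝ) := by
      calc ((s : ℝ)) ^ q = ((s : ℝ)) ^ (q - 1) * ((s : ℝ)) ^ (1:ℝ) := by
            rw [← Real.rpow_add hs0, show q - 1 + 1 = q by ring]
        _ = ((s : ℝ)) ^ (q - 1) * (s : ℝ) := by rw [Real.rpow_one]
    have e2 : ((s : ℝ)) ^ (q - 1) ≤ (((l + m : ℕ)) : ℝ) ^ (q - 1) :=
      Real.rpow_le_rpow hs0.le hsle (by linarith)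
    calc ((s : ℝ)) ^ q * N l m s = ((s : ℝ)) ^ (q - 1) * ((s : ℝ) * N l m s) := by
          rw [e1]; ring
      _ ≤ (((l + m : ℕ)) : ℝ) ^ (q - 1) * ((s : ℝ) * N l m s) :=
          mul_le_mul_of_nonneg_right e2 (mul_nonneg hs0.le (hN_nonneg _ _ _))
  calc ∑ s ∈ Icc 1 (l + m - 1), ((s : ℝ)) ^ q * N l m s
      ≤ ∑ s ∈ Icc 1 (l + m - 1), (((l + m : ℕ)) : ℝ) ^ (q - 1) * ((s : ℝ) * N l m s) :=
        Finset.sum_le_sum hstep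
    _ = (((l + m : ℕ)) : ℝ) ^ (q - 1) * ∑ s ∈ Icc 1 (l + m - 1), (s : ℝ) * N l m s := by
        rw [Finset.mul_sum]
    _ = (((l + m : ℕ)) : ℝ) ^ (q - 1) * ((l : ℝ) + (m : ℝ)) := by
        rw [hN_mass l m hl hm]
    _ = (((l + m : ℕ)) : ℝ) ^ (q - 1) * (((l + m : ℕ)) : ℝ) ^ (1:ℝ) := by
        rw [Real.rpow_one, hcast]
    _ = (((l + m : ℕ)) : ℝ) ^ q := by
        rw [← Real.rpow_add hpos, show q - 1 + 1 = q by ring]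

end TruncAux

/-- `q`-th moment estimate for the truncated solutions: if the first moment of
the initial data is at most `‖w⁰‖`, then
`∑_{i=1}^n i^q wᵢⁿ(t) ≤ exp(A ȷ_q ‖w⁰‖ t) ∑_{i=1}^n i^q wᵢ⁰` on `[0, T]`. -/
theorem truncated_q_moment_estimate
    (q : ℝ) (hq : 1 < q) (T : ℝ) (hT : 0 < T) (A : ℝ) (hA : 0 < A)
    (a p : ℕ → ℕ → ℝ) (N : ℕ → ℕ → ℕ → ℝ)
    (ha_nonneg : ∀ i j, 0 ≤ a i j) (ha_symm : ∀ i j, a i j = a j i)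
    (ha_bound : ∀ i j, 1 ≤ i → 1 ≤ j → a i j ≤ A * ((i : ℝ) + (j : ℝ)))
    (hp_nonneg : ∀ i j, 0 ≤ p i j) (hp_symm : ∀ i j, p i j = p j i)
    (hp_le : ∀ i j, p i j ≤ 1)
    (hN_nonneg : ∀ i j s, 0 ≤ N i j s) (hN_symm : ∀ i j s, N i j s = N j i s)
    (hN_mass : ∀ i j, 1 ≤ i → 1 ≤ j →
      ∑ s ∈ Finset.Icc 1 (i+j-1), (Nat.cast s : ℝ) * N i j s = (i : ℝ) + (j : ℝ))
    (n : ℕ) (hn : 2 ≤ n)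
    (w : ℕ → ℝ → ℝ)
    (hw_nonneg : ∀ i ∈ Finset.Icc 1 n, ∀ t ∈ Set.Icc (0:ℝ) T, 0 ≤ w i t)
    (hw_init_nonneg : ∀ i ∈ Finset.Icc 1 n, 0 ≤ w i 0)
    (hw_ode : ∀ i ∈ Finset.Icc 1 n, ∀ t ∈ Set.Icc (0:ℝ) T,
      HasDerivWithinAt (w i) (truncRHS a p N n i (fun j => w j t)) (Set.Icc 0 T) t)
    (norm0 : ℝ) (hnorm0 : ∑ i ∈ Finset.Icc 1 n, (Nat.cast i : ℝ) * w i 0 ≤ norm0)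
    (jq : ℝ) (hjq : 0 < jq)
    (hjq_ineq : ∀ i j : ℕ, 1 ≤ i → 1 ≤ j →
      ((i : ℝ) + (j : ℝ)) * (((i : ℝ) + (j : ℝ)) ^ q - (i : ℝ) ^ q - (j : ℝ) ^ q)
        ≤ jq * ((i : ℝ) * (j : ℝ) ^ q + (i : ℝ) ^ q * (j : ℝ))) :
    ∀ t ∈ Set.Icc (0:ℝ) T,
      ∑ i ∈ Finset.Icc 1 n, (Nat.cast i : ℝ) ^ q * w i t
        ≤ Real.exp (A * jq * norm0 * t)
            * ∑ i ∈ Finset.Icc 1 n, (Nat.cast i : ℝ) ^ q * w i 0 := by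
  classical
  open Finset TruncAux in
  set K : ℝ := A * jq * norm0 with hK
  set M1 : ℝ → ℝ := fun t => ∑ i ∈ Finset.Icc 1 n, (i : ℝ) * w i t with hM1
  set Mq : ℝ → ℝ := fun t => ∑ i ∈ Finset.Icc 1 n, (i : ℝ) ^ q * w i t with hMq
  set D1 : ℝ → ℝ :=
    fun t => ∑ i ∈ Finset.Icc 1 n, (i : ℝ) * truncRHS a p N n i (fun j => w j t) with hD1
  set Dq : ℝ → ℝ :=
    fun t => ∑ i ∈ Finset.Icc 1 n, (i : ℝ) ^ q * truncRHS a p N n i (fun j => w j t) with hDq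
  have hM1d : ∀ t ∈ Set.Icc (0:ℝ) T, HasDerivWithinAt M1 (D1 t) (Set.Icc 0 T) t := by
    intro t ht
    exact HasDerivWithinAt.fun_sum fun i hi => (hw_ode i hi t ht).const_mul ((i : ℝ))
  have hMqd : ∀ t ∈ Set.Icc (0:ℝ) T, HasDerivWithinAt Mq (Dq t) (Set.Icc 0 T) t := by
    intro t ht
    exact HasDerivWithinAt.fun_sum fun i hi => (hw_ode i hi t ht).const_mul ((i : ℝ) ^ q)
  -- first moment does not increase
  have hD1le : ∀ t ∈ Set.Icc (0:ℝ) T, D1 t ≤ 0 := by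
    intro t ht
    have hb := rhs_sum_le a p N n ha_nonneg ha_symm hp_le (fun i => (i : ℝ))
      (fun l m hl hm _ => le_of_eq (by
        rw [hN_mass l m hl hm]; push_cast; ring))
      (fun j => w j t) (fun i hi => hw_nonneg i hi t ht)
    have hz : (∑ x ∈ S n, (((x.1 + x.2 : ℕ) : ℝ) - (x.1 : ℝ) - (x.2 : ℝ))
        * (a x.1 x.2 * w x.1 t * w x.2 t)) = 0 := by
      refine Finset.sum_eq_zero fun x _ => ?_
      have : ((x.1 + x.2 : ℕ) : ℝ) - (x.1 : ℝ) - (x.2 : ℝ) = 0 := by push_cast; ring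
      rw [this, zero_mul]
    calc D1 t ≤ (1/2) * ∑ x ∈ S n, (((x.1 + x.2 : ℕ) : ℝ) - (x.1 : ℝ) - (x.2 : ℝ))
        * (a x.1 x.2 * w x.1 t * w x.2 t) := hb
      _ = 0 := by rw [hz, mul_zero]
  have hM1le : ∀ t ∈ Set.Icc (0:ℝ) T, M1 t ≤ norm0 := by
    intro t ht
    have hanti := myAntitoneOn M1 D1 hM1d (fun s hs => hD1le s (Set.mem_Icc_of_Ioo hs))
    have h0 : (0:ℝ) ∈ Set.Icc (0:ℝ) T := ⟨le_refl 0, hT.le⟩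
    exact (hanti h0 ht ht.1).trans hnorm0
  -- q-th moment differential inequality
  have hMqnn : ∀ t ∈ Set.Icc (0:ℝ) T, 0 ≤ Mq t := by
    intro t ht
    exact Finset.sum_nonneg fun i hi =>
      mul_nonneg (Real.rpow_nonneg (Nat.cast_nonneg i) q) (hw_nonneg i hi t ht)
  have hDqle : ∀ t ∈ Set.Icc (0:ℝ) T, Dq t ≤ K * Mq t := by
    intro t ht
    have hb := rhs_sum_le a p N n ha_nonneg ha_symm hp_le (fun i => (i : ℝ) ^ q)
      (fun l m hl hm _ => frag_bound hq N hN_nonneg hN_mass l m hl hm)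
      (fun j => w j t) (fun i hi => hw_nonneg i hi t ht)
    have hterm : ∀ x ∈ S n,
        (((x.1 + x.2 : ℕ) : ℝ) ^ q - (x.1 : ℝ) ^ q - (x.2 : ℝ) ^ q)
          * (a x.1 x.2 * w x.1 t * w x.2 t)
        ≤ A * jq * (((x.1 : ℝ) * (x.2 : ℝ) ^ q + (x.1 : ℝ) ^ q * (x.2 : ℝ))
            * (w x.1 t * w x.2 t)) := by
      intro x hx
      obtain ⟨hl, hm, hlm⟩ := mem_S.mp hx
      have hw1 : 0 ≤ w x.1 t := hw_nonneg x.1 (Finset.mem_Icc.mpr ⟨hl, by omega⟩) t ht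
      have hw2 : 0 ≤ w x.2 t := hw_nonneg x.2 (Finset.mem_Icc.mpr ⟨hm, by omega⟩) t ht
      have hww : 0 ≤ w x.1 t * w x.2 t := mul_nonneg hw1 hw2
      have hcast : ((x.1 + x.2 : ℕ) : ℝ) = (x.1 : ℝ) + (x.2 : ℝ) := by push_cast; ring
      have hx1 : (0:ℝ) < (x.1 : ℝ) := by exact_mod_cast hl
      have hx2 : (0:ℝ) < (x.2 : ℝ) := by exact_mod_cast hm
      rw [hcast]
      have hX : 0 ≤ ((x.1 : ℝ) + (x.2 : ℝ)) ^ q - (x.1 : ℝ) ^ q - (x.2 : ℝ) ^ q := by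
        have := rpow_superadd hq hx1 hx2
        linarith
      have e1 : (((x.1 : ℝ) + (x.2 : ℝ)) ^ q - (x.1 : ℝ) ^ q - (x.2 : ℝ) ^ q) * a x.1 x.2
          ≤ (((x.1 : ℝ) + (x.2 : ℝ)) ^ q - (x.1 : ℝ) ^ q - (x.2 : ℝ) ^ q)
            * (A * ((x.1 : ℝ) + (x.2 : ℝ))) :=
        mul_le_mul_of_nonneg_left (ha_bound x.1 x.2 hl hm) hX
      have e2 : A * (((x.1 : ℝ) + (x.2 : ℝ))
            * (((x.1 : ℝ) + (x.2 : ℝ)) ^ q - (x.1 : ℝ) ^ q - (x.2 : ℝ) ^ q))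
          ≤ A * (jq * ((x.1 : ℝ) * (x.2 : ℝ) ^ q + (x.1 : ℝ) ^ q * (x.2 : ℝ))) :=
        mul_le_mul_of_nonneg_left (hjq_ineq x.1 x.2 hl hm) hA.le
      nlinarith [mul_le_mul_of_nonneg_right e1 hww, mul_le_mul_of_nonneg_right e2 hww]
    have hsub : ∑ x ∈ S n, A * jq * (((x.1 : ℝ) * (x.2 : ℝ) ^ q
          + (x.1 : ℝ) ^ q * (x.2 : ℝ)) * (w x.1 t * w x.2 t))
        ≤ ∑ x ∈ Finset.Icc 1 n ×ˢ Finset.Icc 1 n, A * jq * (((x.1 : ℝ) * (x.2 : ℝ) ^ q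
          + (x.1 : ℝ) ^ q * (x.2 : ℝ)) * (w x.1 t * w x.2 t)) := by
      refine Finset.sum_le_sum_of_subset_of_nonneg (Finset.filter_subset _ _) ?_
      intro x hx _
      rw [Finset.mem_product] at hx
      have hw1 : 0 ≤ w x.1 t := hw_nonneg x.1 hx.1 t ht
      have hw2 : 0 ≤ w x.2 t := hw_nonneg x.2 hx.2 t ht
      have h1 : (0:ℝ) ≤ (x.1 : ℝ) * (x.2 : ℝ) ^ q + (x.1 : ℝ) ^ q * (x.2 : ℝ) := by
        have := Real.rpow_nonneg (Nat.cast_nonneg x.1) q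
        have := Real.rpow_nonneg (Nat.cast_nonneg x.2) q
        positivity
      positivity
    have hprod : ∑ x ∈ Finset.Icc 1 n ×ˢ Finset.Icc 1 n, A * jq * (((x.1 : ℝ) * (x.2 : ℝ) ^ q
          + (x.1 : ℝ) ^ q * (x.2 : ℝ)) * (w x.1 t * w x.2 t))
        = A * jq * (M1 t * Mq t + Mq t * M1 t) := by
      rw [Finset.sum_product]
      simp only [hM1, hMq]
      rw [Finset.sum_mul_sum, Finset.sum_mul_sum]
      rw [mul_add, Finset.mul_sum, Finset.mul_sum, ← Finset.sum_add_distrib]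
      refine Finset.sum_congr rfl fun i _ => ?_
      rw [Finset.mul_sum, Finset.mul_sum, ← Finset.sum_add_distrib]
      refine Finset.sum_congr rfl fun j _ => ?_
      ring
    have hfin : Dq t ≤ (1/2) * (A * jq * (M1 t * Mq t + Mq t * M1 t)) := by
      calc Dq t ≤ (1/2) * ∑ x ∈ S n,
            (((x.1 + x.2 : ℕ) : ℝ) ^ q - (x.1 : ℝ) ^ q - (x.2 : ℝ) ^ q)
              * (a x.1 x.2 * w x.1 t * w x.2 t) := hb
        _ ≤ (1/2) * ∑ x ∈ S n, A * jq * (((x.1 : ℝ) * (x.2 : ℝ) ^ q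
              + (x.1 : ℝ) ^ q * (x.2 : ℝ)) * (w x.1 t * w x.2 t)) := by
            have := Finset.sum_le_sum hterm
            linarith
        _ ≤ (1/2) * ∑ x ∈ Finset.Icc 1 n ×ˢ Finset.Icc 1 n,
              A * jq * (((x.1 : ℝ) * (x.2 : ℝ) ^ q
              + (x.1 : ℝ) ^ q * (x.2 : ℝ)) * (w x.1 t * w x.2 t)) := by linarith
        _ = (1/2) * (A * jq * (M1 t * Mq t + Mq t * M1 t)) := by rw [hprod]
    have hlast : (1/2) * (A * jq * (M1 t * Mq t + Mq t * M1 t)) ≤ K * Mq t := by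
      have h1 := hM1le t ht
      have h2 := hMqnn t ht
      have := mul_le_mul_of_nonneg_left h1 (mul_nonneg (mul_nonneg hA.le hjq.le) h2)
      rw [hK]
      nlinarith
    linarith
  -- Gronwall
  intro t ht
  set g : ℝ → ℝ := fun s => Real.exp (-K * s) * Mq s with hg
  have hgd : ∀ s ∈ Set.Icc (0:ℝ) T, HasDerivWithinAt g
      (Real.exp (-K * s) * (-K) * Mq s + Real.exp (-K * s) * Dq s) (Set.Icc 0 T) s := by
    intro s hs
    have he : HasDerivAt (fun u : ℝ => Real.exp (-K * u)) (Real.exp (-K * s) * (-K)) s := by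
      have h0 : HasDerivAt (fun u : ℝ => -K * u) (-K) s := by
        simpa using (hasDerivAt_id s).const_mul (-K)
      exact h0.exp
    exact he.hasDerivWithinAt.mul (hMqd s hs)
  have hgle : ∀ s ∈ Set.Ioo (0:ℝ) T,
      Real.exp (-K * s) * (-K) * Mq s + Real.exp (-K * s) * Dq s ≤ 0 := by
    intro s hs
    have hs' : s ∈ Set.Icc (0:ℝ) T := Set.mem_Icc_of_Ioo hs
    have h1 := hDqle s hs'
    have he := Real.exp_pos (-K * s)
    nlinarith [mul_le_mul_of_nonneg_left h1 he.le]
  have hanti := myAntitoneOn g _ hgd hgle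
  have h0 : (0:ℝ) ∈ Set.Icc (0:ℝ) T := ⟨le_refl 0, hT.le⟩
  have hgt : g t ≤ g 0 := hanti h0 ht ht.1
  have hg0 : g 0 = Mq 0 := by simp [hg]
  have hgt' : Real.exp (-K * t) * Mq t ≤ Mq 0 := by rw [← hg0]; exact hgt
  have hfinal := mul_le_mul_of_nonneg_left hgt' (Real.exp_pos (K * t)).le
  have hee : Real.exp (K * t) * (Real.exp (-K * t) * Mq t) = Mq t := by
    rw [← mul_assoc, ← Real.exp_add]
    simp
  rw [hee] at hfinal
  calc ∑ i ∈ Finset.Icc 1 n, (Nat.cast i : ℝ) ^ q * w i t = Mq t := rfl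
    _ ≤ Real.exp (K * t) * Mq 0 := hfinal
    _ = Real.exp (A * jq * norm0 * t) * ∑ i ∈ Finset.Icc 1 n, (Nat.cast i : ℝ) ^ q * w i 0 := by
        rw [hK]
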